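/- Let α > 2 and s > 0 be real numbers, and let μ be a probability measure on [0,∞) such that ∫ h^{2/α} dμ(h) < ∞. Then ∫₀^∞ (1 − ∫ e^{−s·h·r^{−α/2}} dμ(h)) dr = s^{2/α} · (∫ h^{2/α} dμ(h)) · Γ(1 − 2/α). -/

import Mathlib

open MeasureTheory Set Real

open Filter


lemma one_sub_exp_neg_le {x : ℝ} (hx : 0 ≤ x) : 1 - Real.exp (-x) ≤ x := by
  have := Real.add_one_le_exp (-x)
  nlinarith [Real.exp_pos (-x)]

lemma one_sub_exp_neg_nonneg {x : ℝ} (hx : 0 ≤ x) : 0 ≤ 1 - Real.exp (-x) := by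
  have : Real.exp (-x) ≤ 1 := Real.exp_le_one_iff.mpr (by linarith)
  linarith

lemma mul_exp_neg_le_one {x : ℝ} (hx : 0 ≤ x) : x * Real.exp (-x) ≤ 1 := by
  have h1 : x ≤ Real.exp x := (Real.add_one_le_exp x).trans' (by linarith)
  calc x * Real.exp (-x) ≤ Real.exp x * Real.exp (-x) :=
        mul_le_mul_of_nonneg_right h1 (Real.exp_pos _).le
    _ = 1 := by rw [← Real.exp_add]; simp

lemma contOn_u {β c : ℝ} :
    ContinuousOn (fun r : ℝ => 1 - Real.exp (-(c * r ^ (-β)))) (Ioi 0) := by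
  apply continuousOn_const.sub
  apply Real.continuous_exp.comp_continuousOn
  apply ContinuousOn.neg
  apply continuousOn_const.mul
  exact ContinuousOn.rpow_const continuousOn_id (fun x hx => Or.inl (ne_of_gt hx))

lemma contOn_g0 {β c : ℝ} :
    ContinuousOn (fun r : ℝ => r ^ (-β) * Real.exp (-(c * r ^ (-β)))) (Ioi 0) := by
  have h1 : ContinuousOn (fun r : ℝ => r ^ (-β)) (Ioi 0) :=
    ContinuousOn.rpow_const continuousOn_id (fun x hx => Or.inl (ne_of_gt hx))
  exact h1.mul (Real.continuous_exp.comp_continuousOn (continuousOn_const.mul h1).neg)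

lemma integrableOn_u {β c : ℝ} (hβ : 1 < β) (hc : 0 < c) :
    IntegrableOn (fun r : ℝ => 1 - Real.exp (-(c * r ^ (-β)))) (Ioi 0) := by
  have hmeas : AEStronglyMeasurable (fun r : ℝ => 1 - Real.exp (-(c * r ^ (-β))))
      (volume.restrict (Ioi 0)) :=
    contOn_u.aestronglyMeasurable measurableSet_Ioi
  rw [show Ioi (0:ℝ) = Ioc 0 1 ∪ Ioi 1 by rw [Ioc_union_Ioi_eq_Ioi]; norm_num]
  apply IntegrableOn.union
  · apply Integrable.mono' (integrable_const (1:ℝ))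
      (hmeas.mono_measure (Measure.restrict_mono Ioc_subset_Ioi_self le_rfl))
    rw [ae_restrict_iff' measurableSet_Ioc]
    filter_upwards with r hr
    have hx : 0 ≤ c * r ^ (-β) := mul_nonneg hc.le (Real.rpow_nonneg hr.1.le _)
    rw [Real.norm_eq_abs, abs_of_nonneg (one_sub_exp_neg_nonneg hx)]
    have := Real.exp_pos (-(c * r ^ (-β)))
    linarith
  · apply Integrable.mono'
      ((integrableOn_Ioi_rpow_of_lt (by linarith : -β < -1) one_pos).const_mul c)
      (hmeas.mono_measure (Measure.restrict_mono (Ioi_subset_Ioi zero_le_one) le_rfl))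
    rw [ae_restrict_iff' measurableSet_Ioi]
    filter_upwards with r hr
    have hr0 : (0:ℝ) < r := lt_trans one_pos hr
    have hx : 0 ≤ c * r ^ (-β) := by positivity
    rw [Real.norm_eq_abs, abs_of_nonneg (one_sub_exp_neg_nonneg hx)]
    exact one_sub_exp_neg_le hx

lemma integrableOn_g0 {β c : ℝ} (hβ : 1 < β) (hc : 0 < c) :
    IntegrableOn (fun r : ℝ => r ^ (-β) * Real.exp (-(c * r ^ (-β)))) (Ioi 0) := by
  have hmeas : AEStronglyMeasurable (fun r : ℝ => r ^ (-β) * Real.exp (-(c * r ^ (-β))))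
      (volume.restrict (Ioi 0)) :=
    contOn_g0.aestronglyMeasurable measurableSet_Ioi
  rw [show Ioi (0:ℝ) = Ioc 0 1 ∪ Ioi 1 by rw [Ioc_union_Ioi_eq_Ioi]; norm_num]
  apply IntegrableOn.union
  · apply Integrable.mono' (integrable_const (c⁻¹:ℝ))
      (hmeas.mono_measure (Measure.restrict_mono Ioc_subset_Ioi_self le_rfl))
    rw [ae_restrict_iff' measurableSet_Ioc]
    filter_upwards with r hr
    have hr0 : 0 < r := hr.1
    have hrp : 0 < r ^ (-β) := Real.rpow_pos_of_pos hr0 _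
    have hx : 0 ≤ c * r ^ (-β) := by positivity
    rw [Real.norm_eq_abs, abs_of_nonneg (by positivity)]
    have key := mul_exp_neg_le_one hx
    rw [show r ^ (-β) * Real.exp (-(c * r ^ (-β)))
        = c⁻¹ * (c * r ^ (-β) * Real.exp (-(c * r ^ (-β)))) by field_simp]
    calc c⁻¹ * (c * r ^ (-β) * Real.exp (-(c * r ^ (-β)))) ≤ c⁻¹ * 1 :=
          mul_le_mul_of_nonneg_left key (by positivity)
      _ = c⁻¹ := mul_one _
  · apply Integrable.mono'
      (integrableOn_Ioi_rpow_of_lt (by linarith : -β < -1) one_pos)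
      (hmeas.mono_measure (Measure.restrict_mono (Ioi_subset_Ioi zero_le_one) le_rfl))
    rw [ae_restrict_iff' measurableSet_Ioi]
    filter_upwards with r hr
    have hr0 : (0:ℝ) < r := lt_trans one_pos hr
    have hrp : 0 < r ^ (-β) := Real.rpow_pos_of_pos hr0 _
    rw [Real.norm_eq_abs, abs_of_nonneg (by positivity)]
    calc r ^ (-β) * Real.exp (-(c * r ^ (-β))) ≤ r ^ (-β) * 1 :=
          mul_le_mul_of_nonneg_left (Real.exp_le_one_iff.mpr (neg_nonpos.mpr (by positivity))) hrp.le
      _ = r ^ (-β) := mul_one _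

lemma key_int {β c : ℝ} (hβ : 1 < β) (hc : 0 < c) :
    ∫ r in Ioi (0:ℝ), (1 - Real.exp (-(c * r ^ (-β))))
      = c ^ β⁻¹ * Real.Gamma (1 - β⁻¹) := by
  have hβ0 : (0:ℝ) < β := by linarith
  have hβne : β ≠ 0 := hβ0.ne'
  set u : ℝ → ℝ := fun r => 1 - Real.exp (-(c * r ^ (-β))) with hu_def
  set u' : ℝ → ℝ := fun r => -(c * β * r ^ (-β - 1) * Real.exp (-(c * r ^ (-β)))) with hu'_def
  have hu : ∀ x ∈ Ioi (0:ℝ), HasDerivAt u (u' x) x := by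
    intro x hx
    have hx0 : (0:ℝ) < x := hx
    have h1 : HasDerivAt (fun r : ℝ => r ^ (-β)) (-β * x ^ (-β - 1)) x := by
      simpa using Real.hasDerivAt_rpow_const (p := -β) (Or.inl hx0.ne')
    have h2 : HasDerivAt (fun r : ℝ => -(c * r ^ (-β))) (-(c * (-β * x ^ (-β - 1)))) x :=
      ((h1.const_mul c)).neg
    have h3 := h2.exp
    have h4 := h3.const_sub 1
    refine h4.congr_deriv ?_
    show _ = -(c * β * x ^ (-β - 1) * Real.exp (-(c * x ^ (-β))))
    ring
  have hv : ∀ x ∈ Ioi (0:ℝ), HasDerivAt (fun r : ℝ => r) (1:ℝ) x := fun x _ => hasDerivAt_id x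
  -- boundary limits
  have h_zero : Tendsto (u * fun r : ℝ => r) (nhdsWithin 0 (Ioi 0)) (nhds 0) := by
    have hb : Tendsto (fun r : ℝ => r) (nhdsWithin 0 (Ioi 0)) (nhds 0) :=
      tendsto_id.mono_left nhdsWithin_le_nhds
    apply squeeze_zero' ?_ ?_ hb
    · filter_upwards [self_mem_nhdsWithin] with r (hr : (0:ℝ) < r)
      have hx : 0 ≤ c * r ^ (-β) := mul_nonneg hc.le (Real.rpow_nonneg hr.le _)
      exact mul_nonneg (one_sub_exp_neg_nonneg hx) hr.le
    · filter_upwards [self_mem_nhdsWithin] with r (hr : (0:ℝ) < r)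
      have hx : 0 ≤ c * r ^ (-β) := mul_nonneg hc.le (Real.rpow_nonneg hr.le _)
      have h1 : u r ≤ 1 := by
        have := Real.exp_pos (-(c * r ^ (-β))); simp only [hu_def]; linarith
      calc u r * r ≤ 1 * r := mul_le_mul_of_nonneg_right h1 hr.le
        _ = r := one_mul r
  have h_infty : Tendsto (u * fun r : ℝ => r) atTop (nhds 0) := by
    have hb : Tendsto (fun r : ℝ => c * r ^ (1 - β)) atTop (nhds 0) := by
      have := (tendsto_rpow_neg_atTop (by linarith : (0:ℝ) < β - 1)).const_mul c
      simpa [mul_zero, show -(β-1) = 1 - β by ring] using this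
    apply squeeze_zero' ?_ ?_ hb
    · filter_upwards [eventually_gt_atTop (0:ℝ)] with r hr
      have hx : 0 ≤ c * r ^ (-β) := mul_nonneg hc.le (Real.rpow_nonneg hr.le _)
      exact mul_nonneg (one_sub_exp_neg_nonneg hx) hr.le
    · filter_upwards [eventually_gt_atTop (0:ℝ)] with r hr
      have hx : 0 ≤ c * r ^ (-β) := mul_nonneg hc.le (Real.rpow_nonneg hr.le _)
      have h1 : u r ≤ c * r ^ (-β) := one_sub_exp_neg_le hx
      calc u r * r ≤ c * r ^ (-β) * r := mul_le_mul_of_nonneg_right h1 hr.le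
        _ = c * r ^ (1 - β) := by
            rw [show (1:ℝ) - β = -β + 1 by ring, Real.rpow_add hr, Real.rpow_one, mul_assoc]
  -- integrability hypotheses
  have huv' : IntegrableOn (u * fun _ : ℝ => (1:ℝ)) (Ioi 0) := by
    apply (integrableOn_u hβ hc).congr_fun (fun r _ => by simp [hu_def]) measurableSet_Ioi
  have hg0 := integrableOn_g0 hβ hc
  have hu'v : IntegrableOn (u' * fun r : ℝ => r) (Ioi 0) := by
    apply IntegrableOn.congr_fun (hg0.const_mul (-(c * β))) ?_ measurableSet_Ioi
    intro r hr
    have hr0 : (0:ℝ) < r := hr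
    simp only [hu'_def, Pi.mul_apply]
    rw [show (-β : ℝ) - 1 = -β + -1 by ring, Real.rpow_add hr0, Real.rpow_neg_one]
    field_simp
  have hbp := integral_Ioi_mul_deriv_eq_deriv_mul hu hv huv' hu'v h_zero h_infty
  simp only [mul_one] at hbp
  -- hbp : ∫ x in Ioi 0, u x = 0 - 0 - ∫ x in Ioi 0, u' x * x
  have hstep2 : ∫ x in Ioi (0:ℝ), u' x * x
      = -(c*β) * ∫ x in Ioi (0:ℝ), x ^ (-β) * Real.exp (-(c * x ^ (-β))) := by
    rw [← integral_const_mul]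
    apply setIntegral_congr_fun measurableSet_Ioi
    intro r hr
    have hr0 : (0:ℝ) < r := hr
    simp only [hu'_def]
    rw [show (-β : ℝ) - 1 = -β + -1 by ring, Real.rpow_add hr0, Real.rpow_neg_one]
    field_simp
  have hinv1 : β⁻¹ < 1 := inv_lt_one_of_one_lt₀ hβ
  have hinv0 : 0 < β⁻¹ := inv_pos.mpr hβ0
  have hsub := integral_comp_rpow_Ioi
    (fun r : ℝ => r ^ (-β) * Real.exp (-(c * r ^ (-β)))) (p := -β⁻¹)
    (by simpa using hβne)
  have hsub2 : ∫ x in Ioi (0:ℝ), (|(-β⁻¹)| * x ^ (-β⁻¹ - 1)) •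
        ((x ^ (-β⁻¹)) ^ (-β) * Real.exp (-(c * (x ^ (-β⁻¹)) ^ (-β))))
      = β⁻¹ * ∫ x in Ioi (0:ℝ), x ^ (-β⁻¹) * Real.exp (-(c * x)) := by
    rw [← integral_const_mul]
    apply setIntegral_congr_fun measurableSet_Ioi
    intro x hx
    have hx0 : (0:ℝ) < x := hx
    dsimp only
    have hxx : (x ^ (-β⁻¹)) ^ (-β) = x := by
      rw [← Real.rpow_mul hx0.le]
      rw [show -β⁻¹ * -β = 1 by field_simp]
      exact Real.rpow_one x
    rw [hxx, abs_of_neg (by linarith : -β⁻¹ < 0), smul_eq_mul]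
    rw [show (-β⁻¹ : ℝ) - 1 = -β⁻¹ + -1 by ring, Real.rpow_add hx0, Real.rpow_neg_one]
    field_simp
  have hGamma := Real.integral_rpow_mul_exp_neg_mul_Ioi
    (a := 1 - β⁻¹) (by linarith) hc
  rw [show (1:ℝ) - β⁻¹ - 1 = -β⁻¹ by ring] at hGamma
  rw [hbp, hstep2, ← hsub2.symm.trans hsub, hGamma]
  have hcc : c * (1/c) ^ (1 - β⁻¹) = c ^ β⁻¹ := by
    rw [one_div, ← Real.rpow_neg_one c, ← Real.rpow_mul hc.le]
    nth_rewrite 1 [← Real.rpow_one c]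
    rw [← Real.rpow_add hc]
    congr 1
    ring
  rw [show (0:ℝ) - 0 - -(c*β) * (β⁻¹ * ((1/c) ^ (1-β⁻¹) * Real.Gamma (1-β⁻¹)))
      = (β*β⁻¹) * ((c * (1/c) ^ (1-β⁻¹)) * Real.Gamma (1-β⁻¹)) by ring,
    mul_inv_cancel₀ hβne, one_mul, hcc]

/-- Let `α > 2` and `s > 0` be real numbers, and let `μ` be a probability measure on `[0,∞)`
(formalized as a probability measure on `ℝ` giving a.e. nonnegative values) such that
`∫ h^{2/α} dμ(h) < ∞`. Then
`∫₀^∞ (1 − ∫ e^{−s h r^{−α/2}} dμ(h)) dr = s^{2/α} (∫ h^{2/α} dμ(h)) Γ(1 − 2/α)`. -/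
theorem stmt_1 (α s : ℝ) (hα : 2 < α) (hs : 0 < s)
    (μ : Measure ℝ) [IsProbabilityMeasure μ]
    (hnn : ∀ᵐ h ∂μ, 0 ≤ h)
    (hmom : Integrable (fun h : ℝ => h ^ (2 / α)) μ) :
    ∫ r in Ioi (0 : ℝ), (1 - ∫ h, Real.exp (-(s * h * r ^ (-(α / 2)))) ∂μ)
      = s ^ (2 / α) * (∫ h, h ^ (2 / α) ∂μ) * Real.Gamma (1 - 2 / α) := by
  have hα0 : (0:ℝ) < α := by linarith
  set β := α / 2 with hβdef
  have hβ : 1 < β := by rw [hβdef]; linarith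
  have hβinv : β⁻¹ = 2 / α := by rw [hβdef, inv_div]
  have key : ∀ h : ℝ, 0 ≤ h →
      ∫ r in Ioi (0:ℝ), (1 - Real.exp (-(s * h * r ^ (-β))))
        = (s * h) ^ (2/α) * Real.Gamma (1 - 2/α) := by
    intro h hh
    rcases eq_or_lt_of_le hh with rfl | hh'
    · simp [Real.zero_rpow (by positivity : (2:ℝ)/α ≠ 0)]
    · rw [← hβinv]
      exact key_int hβ (mul_pos hs hh')
  have keyInt : ∀ h : ℝ, 0 ≤ h →
      IntegrableOn (fun r : ℝ => 1 - Real.exp (-(s * h * r ^ (-β)))) (Ioi 0) := by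
    intro h hh
    rcases eq_or_lt_of_le hh with rfl | hh'
    · simpa using integrableOn_const.mpr (Or.inl (by norm_num) : (0:ℝ) = 0 ∨ volume (Ioi (0:ℝ)) < ⊤)
    · exact integrableOn_u hβ (mul_pos hs hh')
  have hstep1 : ∫ r in Ioi (0:ℝ), (1 - ∫ h, Real.exp (-(s * h * r ^ (-β))) ∂μ)
      = ∫ r in Ioi (0:ℝ), ∫ h, (1 - Real.exp (-(s * h * r ^ (-β)))) ∂μ := by
    apply setIntegral_congr_fun measurableSet_Ioi
    intro r hr
    dsimp only
    have hie : Integrable (fun h => Real.exp (-(s * h * r ^ (-β)))) μ := by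
      apply Integrable.mono' (integrable_const (1:ℝ))
      · exact (Real.continuous_exp.comp
          (((continuous_const.mul continuous_id).mul continuous_const).neg)).aestronglyMeasurable
      · filter_upwards [hnn] with h hh
        rw [Real.norm_eq_abs, Real.abs_exp]
        apply Real.exp_le_one_iff.mpr
        have : 0 ≤ s * h * r ^ (-β) :=
          mul_nonneg (mul_nonneg hs.le hh) (Real.rpow_nonneg (le_of_lt hr) _)
        linarith
    rw [integral_sub (integrable_const 1) hie, integral_const, probReal_univ,
      smul_eq_mul, one_mul]
  have hmeas : AEStronglyMeasurable
      (Function.uncurry fun h r : ℝ => 1 - Real.exp (-(s * h * r ^ (-β))))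
      (μ.prod (volume.restrict (Ioi 0))) := by
    exact (by fun_prop :
      Measurable fun p : ℝ × ℝ => 1 - Real.exp (-(s * p.1 * p.2 ^ (-β)))).aestronglyMeasurable
  have hprod : Integrable
      (Function.uncurry fun h r : ℝ => 1 - Real.exp (-(s * h * r ^ (-β))))
      (μ.prod (volume.restrict (Ioi 0))) := by
    rw [integrable_prod_iff hmeas]
    constructor
    · filter_upwards [hnn] with h hh
      exact keyInt h hh
    · have hg : Integrable (fun h : ℝ => s ^ (2/α) * Real.Gamma (1 - 2/α) * h ^ (2/α)) μ :=
        hmom.const_mul _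
      apply hg.congr
      filter_upwards [hnn] with h hh
      have h1 : ∫ r in Ioi (0:ℝ), ‖1 - Real.exp (-(s * h * r ^ (-β)))‖
          = ∫ r in Ioi (0:ℝ), (1 - Real.exp (-(s * h * r ^ (-β)))) := by
        apply setIntegral_congr_fun measurableSet_Ioi
        intro r hr
        dsimp only
        rw [Real.norm_eq_abs, abs_of_nonneg (one_sub_exp_neg_nonneg
          (mul_nonneg (mul_nonneg hs.le hh) (Real.rpow_nonneg (le_of_lt hr) _)))]
      simp only [Function.uncurry_apply_pair]
      rw [h1, key h hh, Real.mul_rpow hs.le hh]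
      ring
  have hswap := integral_integral_swap hprod
  rw [hstep1, ← hswap]
  have hfin : ∫ h, (∫ r in Ioi (0:ℝ), (1 - Real.exp (-(s * h * r ^ (-β))))) ∂μ
      = ∫ h, s ^ (2/α) * Real.Gamma (1 - 2/α) * h ^ (2/α) ∂μ := by
    apply integral_congr_ae
    filter_upwards [hnn] with h hh
    rw [key h hh, Real.mul_rpow hs.le hh]
    ring
  rw [hfin, integral_const_mul]
  ring
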